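/- Let 0 < y < 1 and let a > 0 with a ∉ [1−√y, 1+√y]; set φ(a) = a + ya/(a−1). Then m₃(φ(a)) + m₇(φ(a)) = ∫ x/(φ(a)−x)² dF_y(x) + ∫ x²/(φ(a)−x)³ dF_y(x) = a(a−1+y)(a−1)² / ((a−1)² − y)³. -/

import Mathlib

open MeasureTheory Real Set
open scoped ENNReal NNReal

/-- Density of the Marčenko–Pastur distribution with ratio parameter `c` (the absolutely
continuous part; it vanishes outside `[(1-√c)², (1+√c)²]`). -/
noncomputable def mpDensity (c x : ℝ) : ℝ :=
  if (1 - Real.sqrt c) ^ 2 ≤ x ∧ x ≤ (1 + Real.sqrt c) ^ 2 then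
    Real.sqrt ((x - (1 - Real.sqrt c) ^ 2) * ((1 + Real.sqrt c) ^ 2 - x)) /
      (2 * Real.pi * c * x)
  else 0

/-- The Marčenko–Pastur law with ratio parameter `c > 0`: an atom of mass `max (1 - 1/c) 0`
at `0` plus the absolutely continuous part with density `mpDensity c`.  For `c < 1` (in
particular for `c = y ∈ (0,1)`) the atom vanishes and this is the measure `F_y` with density
`(1/(2πxy))√((x-a_y)(b_y-x))` on `[a_y, b_y]`, `a_y = (1-√y)²`, `b_y = (1+√y)²`. -/
noncomputable def mpLaw (c : ℝ) : Measure ℝ :=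
  ENNReal.ofReal (1 - 1 / c) • Measure.dirac 0 +
    (volume : Measure ℝ).withDensity fun x => ENNReal.ofReal (mpDensity c x)

/-- The map `φ(a) = a + ya/(a-1)` sending a spike outside `[1-√y, 1+√y]` to the a.s. limit
of the corresponding extreme sample eigenvalue, outside the Marčenko–Pastur support. -/
noncomputable def phiSpike (y a : ℝ) : ℝ := a + y * a / (a - 1)



set_option maxHeartbeats 1000000 in
lemma alg (r d t s1 s2 : ℝ) (hs1 : 0 < s1) (hs2 : 0 < s2) (hdt : 0 < d - t)
    (h1 : s1^2 = r^2 - t^2) (h2 : s2^2 = d^2 - r^2) :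
    ((-t/s1*(d*t - r^2) + s1*d) * (2*(d^2-r^2)*(d-t)^2)
        - s1*(d*t-r^2) * -(4*(d^2-r^2)*(d-t))) / (2*(d^2-r^2)*(d-t)^2)^2
      - r^2/(2*s2^3) * (-s2/(s1*(d-t))) = s1/(d-t)^3 := by
  rw [show d^2 - r^2 = s2^2 from h2.symm]
  have hs1ne := hs1.ne'
  have hD := hdt.ne'
  have hs2ne := hs2.ne'
  rw [show ((-t/s1*(d*t - r^2) + s1*d) * (2*s2^2*(d-t)^2)
        - s1*(d*t-r^2) * -(4*s2^2*(d-t))) / (2*s2^2*(d-t)^2)^2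
      - r^2/(2*s2^3) * (-s2/(s1*(d-t)))
      = ((-t*(d*t-r^2) + s1^2*d)*(d-t) + 2*s1^2*(d*t-r^2) + r^2*(d-t)^2)
        / (2*s2^2*s1*(d-t)^3) by field_simp; ring]
  rw [div_eq_div_iff (by positivity) (by positivity)]
  linear_combination (d-t)^3*(-d*(d-t)*h1 - 2*s1^2*h2)


set_option maxHeartbeats 1000000 in
lemma key_pos (r d : ℝ) (hr : 0 < r) (hd : r < d) :
    ∫ t in (-r)..r, Real.sqrt (r^2 - t^2) / (d - t)^3
      = π * r^2 / (2 * Real.sqrt (d^2 - r^2)^3) := by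
  set s2 : ℝ := Real.sqrt (d^2 - r^2) with hs2def
  have hd0 : 0 < d := hr.trans hd
  have hdr : 0 < d^2 - r^2 := by nlinarith
  have hs2pos : 0 < s2 := Real.sqrt_pos.mpr hdr
  have hs2sq : s2^2 = d^2 - r^2 := Real.sq_sqrt hdr.le
  set F : ℝ → ℝ := fun t =>
    Real.sqrt (r^2 - t^2) * (d*t - r^2) / (2*(d^2 - r^2)*(d - t)^2)
      - r^2 / (2*s2^3) * Real.arcsin ((r^2 - d*t) / (r*(d - t))) with hF
  have hle : (-r : ℝ) ≤ r := by linarith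
  have hdt : ∀ t ∈ Icc (-r) r, 0 < d - t := fun t ht => by
    have := ht.2; linarith
  have hcont : ContinuousOn F (Icc (-r) r) := by
    apply ContinuousOn.sub
    · apply ContinuousOn.div
      · exact ((continuous_const.sub (continuous_pow 2)).sqrt.mul
          (show Continuous fun t : ℝ => d*t - r^2 by continuity)).continuousOn
      · exact (show Continuous fun t : ℝ => 2*(d^2-r^2)*(d-t)^2 by continuity).continuousOn
      · intro t ht
        have := hdt t ht
        positivity
    · apply ContinuousOn.mul continuousOn_const
      apply Real.continuous_arcsin.comp_continuousOn
      apply ContinuousOn.div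
        (show Continuous fun t : ℝ => r^2 - d*t by continuity).continuousOn
        (show Continuous fun t : ℝ => r*(d-t) by continuity).continuousOn
      intro t ht
      have := hdt t ht
      positivity
  have hci : ContinuousOn (fun t => Real.sqrt (r^2 - t^2) / (d - t)^3) (uIcc (-r) r) := by
    rw [uIcc_of_le hle]
    apply ContinuousOn.div
    · exact (continuous_const.sub (continuous_pow 2)).sqrt.continuousOn
    · exact (show Continuous fun t : ℝ => (d-t)^3 by continuity).continuousOn
    · intro t ht
      have := hdt t ht
      positivity
  have hint : IntervalIntegrable (fun t => Real.sqrt (r^2 - t^2) / (d - t)^3)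
      volume (-r) r := hci.intervalIntegrable
  have hderiv : ∀ t ∈ Ioo (-r) r,
      HasDerivAt F (Real.sqrt (r^2 - t^2) / (d - t)^3) t := by
    intro t ht
    have ht1 : -r < t := ht.1
    have ht2 : t < r := ht.2
    have hq : 0 < r^2 - t^2 := by nlinarith
    have hdt0 : 0 < d - t := by linarith
    set s1 : ℝ := Real.sqrt (r^2 - t^2) with hs1def
    have hs1pos : 0 < s1 := Real.sqrt_pos.mpr hq
    have hs1sq : s1^2 = r^2 - t^2 := Real.sq_sqrt hq.le
    have hsq : HasDerivAt (fun t => Real.sqrt (r^2 - t^2)) (-t/s1) t := by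
      have h1 : HasDerivAt (fun t : ℝ => r^2 - t^2) (-(2*t)) t := by
        simpa using (hasDerivAt_pow 2 t).const_sub (r^2)
      have := (Real.hasDerivAt_sqrt hq.ne').comp t h1
      refine this.congr_deriv (Eq.symm ?_)
      rw [← hs1def]; field_simp
    have hA : HasDerivAt (fun t => Real.sqrt (r^2 - t^2) * (d*t - r^2))
        ((-t/s1)*(d*t - r^2) + s1*d) t := by
      have h2 : HasDerivAt (fun t : ℝ => d*t - r^2) d t := by
        simpa using ((hasDerivAt_id t).const_mul d).sub_const (r^2)
      exact hsq.mul h2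
    have hB : HasDerivAt (fun t : ℝ => 2*(d^2 - r^2)*(d - t)^2)
        (-(4*(d^2-r^2)*(d-t))) t := by
      have h3 : HasDerivAt (fun t : ℝ => (d - t)^2) (2*(d-t)^1*(-1)) t :=
        ((hasDerivAt_id t).const_sub d).pow 2
      have := h3.const_mul (2*(d^2-r^2))
      refine this.congr_deriv (Eq.symm ?_)
      ring
    have hBne : 2*(d^2 - r^2)*(d - t)^2 ≠ 0 := by positivity
    have hfrac := hA.div hB hBne
    have hu : HasDerivAt (fun t => (r^2 - d*t) / (r*(d - t)))
        ((r^2 - d^2)/(r*(d-t)^2)) t := by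
      have hN : HasDerivAt (fun t : ℝ => r^2 - d*t) (-d) t := by
        simpa using ((hasDerivAt_id t).const_mul d).const_sub (r^2)
      have hD : HasDerivAt (fun t : ℝ => r*(d - t)) (-r) t := by
        have := ((hasDerivAt_id t).const_sub d).const_mul r
        refine this.congr_deriv (Eq.symm ?_); ring
      have hDne : r*(d - t) ≠ 0 := by positivity
      have := hN.div hD hDne
      refine this.congr_deriv (Eq.symm ?_)
      field_simp
      ring
    have hu2 : ((r^2 - d*t) / (r*(d - t)))^2 < 1 := by
      rw [div_pow, div_lt_one (by positivity)]
      nlinarith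
    have hune1 : (r^2 - d*t) / (r*(d - t)) ≠ 1 := by nlinarith [hu2]
    have hune2 : (r^2 - d*t) / (r*(d - t)) ≠ -1 := by nlinarith [hu2]
    have harc := (Real.hasDerivAt_arcsin hune2 hune1).comp t hu
    have hkey : (r*(d-t))^2 - (r^2 - d*t)^2 = s2^2*s1^2 := by
      rw [hs1sq, hs2sq]; ring
    have hsqrt1u : Real.sqrt (1 - ((r^2 - d*t) / (r*(d - t)))^2) = s2*s1/(r*(d-t)) := by
      have h5 : 1 - ((r^2 - d*t) / (r*(d - t)))^2 = (s2*s1/(r*(d-t)))^2 := by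
        field_simp
        linear_combination hkey
      rw [h5, Real.sqrt_sq (by positivity)]
    have harc2 : HasDerivAt (fun t => Real.arcsin ((r^2 - d*t) / (r*(d - t))))
        (-s2/(s1*(d-t))) t := by
      refine harc.congr_deriv (Eq.symm ?_)
      rw [hsqrt1u]
      field_simp
      linear_combination (-1) * hs2sq
    have htotal := hfrac.sub ((harc2.const_mul (r^2 / (2*s2^3))))
    refine htotal.congr_deriv (Eq.symm ?_)
    rw [← hs1def]
    exact (alg r d t s1 s2 hs1pos hs2pos hdt0 hs1sq hs2sq).symm
  have hftc := intervalIntegral.integral_eq_sub_of_hasDeriv_right_of_le hle hcont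
    (fun t ht => (hderiv t ht).hasDerivWithinAt) hint
  rw [hftc]
  have a1 : (r^2 - d*r) / (r*(d - r)) = -1 := by
    have : (0:ℝ) < r*(d-r) := mul_pos hr (by linarith)
    rw [div_eq_iff this.ne']; ring
  have a2 : (r^2 - d*(-r)) / (r*(d - (-r))) = 1 := by
    have : (0:ℝ) < r*(d-(-r)) := mul_pos hr (by linarith)
    rw [div_eq_one_iff_eq this.ne']; ring
  have e1 : Real.sqrt (r^2 - r^2) = 0 := by simp
  have e2 : Real.sqrt (r^2 - (-r)^2) = 0 := by
    rw [show r^2 - (-r)^2 = 0 by ring, Real.sqrt_zero]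
  have hFr : F r = π * r^2/(4*s2^3) := by
    simp only [hF, e1, a1, Real.arcsin_neg_one, zero_mul, zero_div, zero_sub]
    field_simp; ring
  have hFmr : F (-r) = -(π * r^2/(4*s2^3)) := by
    simp only [hF, e2, a2, Real.arcsin_one, zero_mul, zero_div, zero_sub]
    field_simp; ring
  rw [hFr, hFmr]
  field_simp
  ring

lemma key_neg (r d : ℝ) (hr : 0 < r) (hd : d < -r) :
    ∫ t in (-r)..r, Real.sqrt (r^2 - t^2) / (d - t)^3
      = -(π * r^2 / (2 * Real.sqrt (d^2 - r^2)^3)) := by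
  have hfun : (fun t : ℝ => Real.sqrt (r^2 - t^2)/(d - t)^3)
      = fun t => Real.sqrt (r^2 - (-t)^2)/(d + -t)^3 := by
    funext t; rw [neg_sq]; ring_nf
  rw [hfun]
  have h0 := intervalIntegral.integral_comp_neg (a := -r) (b := r)
    (fun u => Real.sqrt (r^2 - u^2)/(d + u)^3)
  rw [neg_neg] at h0
  rw [h0]
  have hfun2 : (fun u : ℝ => Real.sqrt (r^2 - u^2)/(d + u)^3)
      = fun u => -(Real.sqrt (r^2 - u^2)/((-d) - u)^3) := by
    funext u
    rw [show ((-d) - u)^3 = -((d + u)^3) by ring, div_neg, neg_neg]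
  rw [hfun2, intervalIntegral.integral_neg]
  rw [key_pos r (-d) hr (by linarith), neg_sq]

lemma key_shift_pos (α β lam : ℝ) (hab : α < β) (hl : β < lam) :
    ∫ x in α..β, Real.sqrt ((x - α)*(β - x)) / (lam - x)^3
      = π * ((β-α)/2)^2 / (2 * Real.sqrt ((lam-α)*(lam-β))^3) := by
  set r := (β-α)/2 with hr
  set c := (α+β)/2 with hc
  set d := lam - c with hd
  have hr0 : 0 < r := by rw [hr]; linarith
  have hrd : r < d := by rw [hr, hd, hc]; linarith
  have hfun : (fun t : ℝ => Real.sqrt (r^2 - t^2)/(d - t)^3)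
      = fun t => Real.sqrt ((t + c - α)*(β - (t + c)))/(lam - (t + c))^3 := by
    funext t
    rw [show (t + c - α)*(β - (t + c)) = r^2 - t^2 by rw [hr, hc]; ring,
      show lam - (t + c) = d - t by rw [hd]; ring]
  have hcomp := intervalIntegral.integral_comp_add_right
    (fun x => Real.sqrt ((x - α)*(β - x))/(lam - x)^3) c (a := -r) (b := r)
  rw [show -r + c = α by rw [hr, hc]; ring, show r + c = β by rw [hr, hc]; ring] at hcomp
  calc ∫ x in α..β, Real.sqrt ((x - α)*(β - x)) / (lam - x)^3
      = ∫ t in (-r)..r, Real.sqrt ((t + c - α)*(β - (t + c)))/(lam - (t + c))^3 :=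
        hcomp.symm
    _ = ∫ t in (-r)..r, Real.sqrt (r^2 - t^2)/(d - t)^3 := by rw [← hfun]
    _ = π * r^2 / (2 * Real.sqrt (d^2 - r^2)^3) := key_pos r d hr0 hrd
    _ = π * ((β-α)/2)^2 / (2 * Real.sqrt ((lam-α)*(lam-β))^3) := by
        rw [show d^2 - r^2 = (lam-α)*(lam-β) by rw [hd, hr, hc]; ring, hr]

lemma key_shift_neg (α β lam : ℝ) (hab : α < β) (hl : lam < α) :
    ∫ x in α..β, Real.sqrt ((x - α)*(β - x)) / (lam - x)^3
      = -(π * ((β-α)/2)^2 / (2 * Real.sqrt ((lam-α)*(lam-β))^3)) := by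
  set r := (β-α)/2 with hr
  set c := (α+β)/2 with hc
  set d := lam - c with hd
  have hr0 : 0 < r := by rw [hr]; linarith
  have hrd : d < -r := by rw [hr, hd, hc]; linarith
  have hfun : (fun t : ℝ => Real.sqrt (r^2 - t^2)/(d - t)^3)
      = fun t => Real.sqrt ((t + c - α)*(β - (t + c)))/(lam - (t + c))^3 := by
    funext t
    rw [show (t + c - α)*(β - (t + c)) = r^2 - t^2 by rw [hr, hc]; ring,
      show lam - (t + c) = d - t by rw [hd]; ring]
  have hcomp := intervalIntegral.integral_comp_add_right
    (fun x => Real.sqrt ((x - α)*(β - x))/(lam - x)^3) c (a := -r) (b := r)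
  rw [show -r + c = α by rw [hr, hc]; ring, show r + c = β by rw [hr, hc]; ring] at hcomp
  calc ∫ x in α..β, Real.sqrt ((x - α)*(β - x)) / (lam - x)^3
      = ∫ t in (-r)..r, Real.sqrt ((t + c - α)*(β - (t + c)))/(lam - (t + c))^3 :=
        hcomp.symm
    _ = ∫ t in (-r)..r, Real.sqrt (r^2 - t^2)/(d - t)^3 := by rw [← hfun]
    _ = -(π * r^2 / (2 * Real.sqrt (d^2 - r^2)^3)) := key_neg r d hr0 hrd
    _ = -(π * ((β-α)/2)^2 / (2 * Real.sqrt ((lam-α)*(lam-β))^3)) := by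
        rw [show d^2 - r^2 = (lam-α)*(lam-β) by rw [hd, hr, hc]; ring, hr]

lemma sqrt_lt_one' (y : ℝ) (hy0 : 0 < y) (hy1 : y < 1) : Real.sqrt y < 1 := by
  rw [show (1:ℝ) = Real.sqrt 1 by simp]
  exact Real.sqrt_lt_sqrt hy0.le hy1

lemma mpDensity_nonneg (y : ℝ) (hy0 : 0 < y) (hy1 : y < 1) (x : ℝ) :
    0 ≤ mpDensity y x := by
  unfold mpDensity
  split_ifs with h
  · have hsy1 : Real.sqrt y < 1 := sqrt_lt_one' y hy0 hy1
    have hα : 0 < (1 - Real.sqrt y)^2 := pow_pos (by linarith) 2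
    have hx : 0 < x := lt_of_lt_of_le hα h.1
    exact div_nonneg (Real.sqrt_nonneg _) (by positivity)
  · exact le_refl 0

lemma mpDensity_measurable (y : ℝ) : Measurable (mpDensity y) := by
  unfold mpDensity
  apply Measurable.ite
  · exact (measurableSet_Icc :
      MeasurableSet (Icc ((1 - Real.sqrt y)^2) ((1 + Real.sqrt y)^2)))
  · exact ((show Continuous fun x : ℝ =>
        (x - (1 - Real.sqrt y)^2) * ((1 + Real.sqrt y)^2 - x) by continuity).sqrt.measurable).div
      (show Continuous fun x : ℝ => 2*π*y*x by continuity).measurable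
  · exact measurable_const

lemma mp_integral (y : ℝ) (hy0 : 0 < y) (hy1 : y < 1) (g : ℝ → ℝ) :
    ∫ x, g x ∂mpLaw y
      = ∫ x in ((1 - Real.sqrt y)^2)..((1 + Real.sqrt y)^2), mpDensity y x * g x := by
  have hsy1 : Real.sqrt y < 1 := sqrt_lt_one' y hy0 hy1
  have hab : (1 - Real.sqrt y)^2 ≤ (1 + Real.sqrt y)^2 := by
    have := Real.sqrt_nonneg y; nlinarith
  have hatom : ENNReal.ofReal (1 - 1/y) = 0 := by
    rw [ENNReal.ofReal_eq_zero]
    have : 1 < 1/y := by rw [lt_div_iff₀ hy0]; linarith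
    linarith
  have hlaw : mpLaw y = (volume : Measure ℝ).withDensity
      fun x => ENNReal.ofReal (mpDensity y x) := by
    unfold mpLaw; rw [hatom, zero_smul, zero_add]
  rw [hlaw]
  have hmeas : Measurable fun x => (mpDensity y x).toNNReal :=
    (mpDensity_measurable y).real_toNNReal
  rw [show (fun x => ENNReal.ofReal (mpDensity y x))
      = fun x => ((mpDensity y x).toNNReal : ℝ≥0∞) from rfl]
  rw [integral_withDensity_eq_integral_smul hmeas g]
  have h1 : (fun x => (mpDensity y x).toNNReal • g x)
      = Set.indicator (Icc ((1 - Real.sqrt y)^2) ((1 + Real.sqrt y)^2))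
          (fun x => mpDensity y x * g x) := by
    funext x
    have hsmul : (mpDensity y x).toNNReal • g x = mpDensity y x * g x := by
      rw [NNReal.smul_def, Real.coe_toNNReal _ (mpDensity_nonneg y hy0 hy1 x), smul_eq_mul]
    by_cases hx : x ∈ Icc ((1 - Real.sqrt y)^2) ((1 + Real.sqrt y)^2)
    · rw [Set.indicator_of_mem hx, hsmul]
    · rw [Set.indicator_of_notMem hx, hsmul]
      have h0 : mpDensity y x = 0 := by
        unfold mpDensity; rw [if_neg]; exact fun hc => hx ⟨hc.1, hc.2⟩
      rw [h0, zero_mul]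
  rw [h1, integral_indicator measurableSet_Icc, integral_Icc_eq_integral_Ioc,
    ← intervalIntegral.integral_of_le hab]

set_option maxHeartbeats 2000000 in
/-- `m₃(φ(a)) + m₇(φ(a)) = ∫ x/(φ(a)−x)² dF_y + ∫ x²/(φ(a)−x)³ dF_y
      = a(a−1+y)(a−1)² / ((a−1)²−y)³`. -/
theorem mp_m3_add_m7_phi (y a : ℝ) (hy0 : 0 < y) (hy1 : y < 1) (ha : 0 < a)
    (hout : a ∉ Set.Icc (1 - Real.sqrt y) (1 + Real.sqrt y)) :
    (∫ x, x / (phiSpike y a - x) ^ 2 ∂mpLaw y) +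
        (∫ x, x ^ 2 / (phiSpike y a - x) ^ 3 ∂mpLaw y) =
      a * (a - 1 + y) * (a - 1) ^ 2 / ((a - 1) ^ 2 - y) ^ 3 := by
  have hsy0 : 0 < Real.sqrt y := Real.sqrt_pos.mpr hy0
  have hsy1 : Real.sqrt y < 1 := sqrt_lt_one' y hy0 hy1
  have hsysq : Real.sqrt y ^ 2 = y := Real.sq_sqrt hy0.le
  set sy := Real.sqrt y with hsydef
  set α := (1 - sy)^2 with hα
  set β := (1 + sy)^2 with hβ
  set lam := phiSpike y a with hlam
  have hαpos : 0 < α := pow_pos (by linarith) 2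
  have hab : α < β := by rw [hα, hβ]; nlinarith
  have hcase : a < 1 - sy ∨ 1 + sy < a := by
    by_contra hc
    push_neg at hc
    exact hout ⟨hc.1, hc.2⟩
  have hane : a - 1 ≠ 0 := by rcases hcase with h | h <;> [nlinarith; nlinarith]
  have hgap : y < (a-1)^2 := by rcases hcase with h | h <;> nlinarith
  have hgapne : (a-1)^2 - y ≠ 0 := by linarith
  have hloc : (a < 1 - sy ∧ lam < α) ∨ (1 + sy < a ∧ β < lam) := by
    rcases hcase with h | h
    · left
      refine ⟨h, ?_⟩
      have h1a : (1:ℝ) - a ≠ 0 := by nlinarith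
      have h2 : α - lam = ((a-1)+sy)^2/(1-a) := by
        rw [hlam, phiSpike, hα, ← hsysq]
        field_simp
        ring
      have hneg : (a-1)+sy < 0 := by linarith
      have hnum : 0 < ((a-1)+sy)^2 := by nlinarith
      have h3 : 0 < ((a-1)+sy)^2/(1-a) := div_pos hnum (by nlinarith)
      linarith
    · right
      refine ⟨h, ?_⟩
      have h2 : lam - β = ((a-1)-sy)^2/(a-1) := by
        rw [hlam, phiSpike, hβ, ← hsysq]
        field_simp
        ring
      have hpos : 0 < (a-1)-sy := by linarith
      have hnum : 0 < ((a-1)-sy)^2 := by nlinarith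
      have h3 : 0 < ((a-1)-sy)^2/(a-1) := div_pos hnum (by linarith)
      linarith
  have hlamne : ∀ x ∈ Icc α β, lam - x ≠ 0 := by
    intro x hx
    rcases hloc with ⟨hc, h⟩ | ⟨hc, h⟩
    · have : lam - x < 0 := by have := hx.1; linarith
      exact this.ne
    · have : 0 < lam - x := by have := hx.2; linarith
      exact this.ne'
  rw [mp_integral y hy0 hy1 (fun x => x / (lam - x)^2),
      mp_integral y hy0 hy1 (fun x => x^2 / (lam - x)^3)]
  simp only [← hsydef, ← hα, ← hβ]
  have hdens : ∀ x ∈ Icc α β,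
      mpDensity y x = Real.sqrt ((x - α)*(β - x)) / (2*π*y*x) := by
    intro x hx
    unfold mpDensity
    simp only [← hsydef, ← hα, ← hβ]
    rw [if_pos ⟨hx.1, hx.2⟩]
  have hEq1 : EqOn (fun x => mpDensity y x * (x / (lam - x)^2))
      (fun x => Real.sqrt ((x - α)*(β - x)) / (2*π*y*x) * (x / (lam - x)^2))
      (uIcc α β) := by
    intro x hx
    rw [uIcc_of_le hab.le] at hx
    simp only
    rw [hdens x hx]
  have hEq2 : EqOn (fun x => mpDensity y x * (x^2 / (lam - x)^3))
      (fun x => Real.sqrt ((x - α)*(β - x)) / (2*π*y*x) * (x^2 / (lam - x)^3))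
      (uIcc α β) := by
    intro x hx
    rw [uIcc_of_le hab.le] at hx
    simp only
    rw [hdens x hx]
  rw [intervalIntegral.integral_congr hEq1, intervalIntegral.integral_congr hEq2]
  have hcont0 : ContinuousOn (fun x : ℝ => Real.sqrt ((x - α)*(β - x)) / (2*π*y*x))
      (Icc α β) := by
    apply ContinuousOn.div
    · exact (show Continuous fun x : ℝ => (x - α)*(β - x) by continuity).sqrt.continuousOn
    · exact (show Continuous fun x : ℝ => 2*π*y*x by continuity).continuousOn
    · intro x hx
      have hx0 : 0 < x := lt_of_lt_of_le hαpos hx.1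
      positivity
  have hi1 : IntervalIntegrable
      (fun x => Real.sqrt ((x - α)*(β - x)) / (2*π*y*x) * (x / (lam - x)^2))
      volume α β := by
    apply ContinuousOn.intervalIntegrable
    rw [uIcc_of_le hab.le]
    apply hcont0.mul
    apply ContinuousOn.div continuousOn_id
      (show Continuous fun x : ℝ => (lam - x)^2 by continuity).continuousOn
    intro x hx
    exact pow_ne_zero 2 (hlamne x hx)
  have hi2 : IntervalIntegrable
      (fun x => Real.sqrt ((x - α)*(β - x)) / (2*π*y*x) * (x^2 / (lam - x)^3))
      volume α β := by
    apply ContinuousOn.intervalIntegrable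
    rw [uIcc_of_le hab.le]
    apply hcont0.mul
    apply ContinuousOn.div (continuous_pow 2).continuousOn
      (show Continuous fun x : ℝ => (lam - x)^3 by continuity).continuousOn
    intro x hx
    exact pow_ne_zero 3 (hlamne x hx)
  rw [← intervalIntegral.integral_add hi1 hi2]
  have hEq3 : EqOn
      (fun x => Real.sqrt ((x - α)*(β - x)) / (2*π*y*x) * (x / (lam - x)^2)
        + Real.sqrt ((x - α)*(β - x)) / (2*π*y*x) * (x^2 / (lam - x)^3))
      (fun x => lam/(2*π*y) * (Real.sqrt ((x - α)*(β - x)) / (lam - x)^3))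
      (uIcc α β) := by
    intro x hx
    rw [uIcc_of_le hab.le] at hx
    have hx0 : 0 < x := lt_of_lt_of_le hαpos hx.1
    have hlx := hlamne x hx
    simp only
    field_simp
    ring
  rw [intervalIntegral.integral_congr hEq3, intervalIntegral.integral_const_mul]
  have hβα : (β - α)/2 = 2*sy := by rw [hα, hβ]; ring
  rcases hloc with ⟨hc, h⟩ | ⟨hc, h⟩
  · rw [key_shift_neg α β lam hab h]
    have h1a : (0:ℝ) < 1 - a := by linarith
    have h1a' : (1:ℝ) - a ≠ 0 := h1a.ne'
    have hquad : 1 - a*2 + a^2 ≠ 0 := by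
      have e : 1 - a*2 + a^2 = (1-a)^2 := by ring
      rw [e]; positivity
    have hS : Real.sqrt ((lam - α)*(lam - β)) = ((a-1)^2 - y)/(1-a) := by
      have h4 : (lam - α)*(lam - β) = (((a-1)^2 - y)/(1-a))^2 := by
        rw [hlam, phiSpike, hα, hβ, ← hsysq]
        field_simp
        ring
      rw [h4, Real.sqrt_sq (div_nonneg (by linarith) h1a.le)]
    rw [hS, hβα, hlam, phiSpike]
    rw [← hsysq] at hgapne ⊢
    field_simp
    ring
  · rw [key_shift_pos α β lam hab h]
    have h1a : (0:ℝ) < a - 1 := by linarith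
    have h1a' : a - (1:ℝ) ≠ 0 := h1a.ne'
    have hquad : 1 - a*2 + a^2 ≠ 0 := by
      have e : 1 - a*2 + a^2 = (a-1)^2 := by ring
      rw [e]; positivity
    have hS : Real.sqrt ((lam - α)*(lam - β)) = ((a-1)^2 - y)/(a-1) := by
      have h4 : (lam - α)*(lam - β) = (((a-1)^2 - y)/(a-1))^2 := by
        rw [hlam, phiSpike, hα, hβ, ← hsysq]
        field_simp
        ring
      rw [h4, Real.sqrt_sq (div_nonneg (by linarith) h1a.le)]
    rw [hS, hβα, hlam, phiSpike]
    rw [← hsysq] at hgapne ⊢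
    field_simp
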